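/- Let G ∈ L²(ℝ) and define u₀(r) = (1/r)∫_{-r}^{r} G(s) ds and u₁(r) = (G(r)-G(-r))/r for r > 0, viewed as radial functions on ℝ³. Then for every R > 0, ∫_{|x|>R} (|∇u₀|² + |u₁|²) dx ≥ 8π ∫_{|s|>R} |G(s)|² ds. -/

import Mathlib

open MeasureTheory Real Set Filter Topology

namespace Stmt1Aux

noncomputable def phi (G : ℝ → ℝ) (s : ℝ) : ℝ := G s + G (-s)
noncomputable def AF (G : ℝ → ℝ) (t : ℝ) : ℝ := ∫ s in (0:ℝ)..t, phi G s

variable {G : ℝ → ℝ}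

lemma memℒp_neg (hG2 : MemLp G 2 (volume : Measure ℝ)) :
    MemLp (fun s : ℝ => G (-s)) 2 volume :=
  hG2.comp_measurePreserving (Measure.measurePreserving_neg _)

lemma memℒp_phi (hG2 : MemLp G 2 (volume : Measure ℝ)) : MemLp (phi G) 2 volume :=
  hG2.add (memℒp_neg hG2)

lemma integrableOn_of_memℒp2 {f : ℝ → ℝ} (hf : MemLp f 2 (volume : Measure ℝ)) {s : Set ℝ}
    (hs : volume s ≠ ⊤) : IntegrableOn f s volume := by
  haveI : IsFiniteMeasure ((volume : Measure ℝ).restrict s) :=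
    ⟨by simpa [Measure.restrict_apply_univ] using hs.lt_top⟩
  exact (hf.restrict s).integrable (by norm_num)

lemma intervalIntegrable_of_memℒp2 {f : ℝ → ℝ} (hf : MemLp f 2 (volume : Measure ℝ)) (a b : ℝ) :
    IntervalIntegrable f volume a b := by
  rw [intervalIntegrable_iff]
  exact integrableOn_of_memℒp2 hf measure_Ioc_lt_top.ne

lemma continuous_AF (hG2 : MemLp G 2 (volume : Measure ℝ)) : Continuous (AF G) :=
  intervalIntegral.continuous_primitive
    (fun a b => intervalIntegrable_of_memℒp2 (memℒp_phi hG2) a b) 0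

lemma ae_hasDerivAt_AF (hG2 : MemLp G 2 (volume : Measure ℝ)) :
    ∀ᵐ r : ℝ, HasDerivAt (AF G) (phi G r) r := by
  have hloc : LocallyIntegrable (phi G) volume :=
    (memℒp_phi hG2).locallyIntegrable (by norm_num)
  filter_upwards [IsUnifLocDoublingMeasure.ae_tendsto_average_norm_sub volume hloc 1] with r hr
  rw [hasDerivAt_iff_tendsto_slope]
  have δlim : Tendsto (fun y : ℝ => |y - r|) (𝓝[≠] r) (𝓝[>] 0) := by
    rw [tendsto_nhdsWithin_iff]
    constructor
    · exact (((continuous_id.sub continuous_const).abs).tendsto' r 0 (by simp)).mono_left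
        nhdsWithin_le_nhds
    · filter_upwards [self_mem_nhdsWithin] with y hy
      exact abs_pos.2 (sub_ne_zero.2 hy)
  have key := hr (fun _ => r) (fun y => |y - r|) δlim
    (Eventually.of_forall fun y => by simp [Metric.mem_closedBall, dist_self])
  have main : Tendsto (fun y => slope (AF G) r y - phi G r) (𝓝[≠] r) (𝓝 0) := by
    apply squeeze_zero_norm'
      (a := fun y => 2 * ⨍ t in Metric.closedBall r |y - r|, ‖phi G t - phi G r‖)
    · filter_upwards [self_mem_nhdsWithin] with y hy
      have hyr : y - r ≠ 0 := sub_ne_zero.2 hy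
      have habs : (0:ℝ) < |y - r| := abs_pos.2 hyr
      have hII : ∀ a b : ℝ, IntervalIntegrable (phi G) volume a b :=
        intervalIntegrable_of_memℒp2 (memℒp_phi hG2)
      have hsub : AF G y - AF G r = ∫ t in r..y, phi G t := by
        rw [AF, AF, intervalIntegral.integral_interval_sub_left (hII 0 y) (hII 0 r)]
      have hslope : slope (AF G) r y - phi G r
          = (y - r)⁻¹ * ((∫ t in r..y, phi G t) - (y - r) * phi G r) := by
        rw [slope_def_field, hsub]; field_simp
      have hconst : (∫ _t in r..y, phi G r) = (y - r) * phi G r := by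
        simp [intervalIntegral.integral_const, smul_eq_mul]
      have h1 : ‖slope (AF G) r y - phi G r‖
          ≤ |y - r|⁻¹ * ∫ t in uIoc r y, ‖phi G t - phi G r‖ := by
        rw [hslope, norm_mul, norm_inv, Real.norm_eq_abs]
        apply mul_le_mul_of_nonneg_left _ (by positivity)
        rw [← hconst, ← intervalIntegral.integral_sub (hII r y) intervalIntegrable_const]
        exact intervalIntegral.norm_integral_le_integral_norm_uIoc
      have hball : IntegrableOn (fun t => ‖phi G t - phi G r‖)
          (Metric.closedBall r |y - r|) volume :=
        ((hloc.integrableOn_isCompact (isCompact_closedBall r _)).sub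
          (integrableOn_const measure_closedBall_lt_top.ne)).norm
      have hsubset : uIoc r y ⊆ Metric.closedBall r |y - r| := by
        intro t ht
        rcases le_total r y with h | h
        · rw [uIoc_of_le h] at ht
          simp only [Metric.mem_closedBall, Real.dist_eq]
          rw [abs_of_nonneg (by linarith [ht.1.le] : (0:ℝ) ≤ t - r),
            abs_of_nonneg (by linarith : (0:ℝ) ≤ y - r)]
          linarith [ht.2]
        · rw [uIoc_of_ge h] at ht
          simp only [Metric.mem_closedBall, Real.dist_eq]
          rw [abs_of_nonpos (by linarith [ht.2] : t - r ≤ 0),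
            abs_of_nonpos (by linarith : y - r ≤ 0)]
          linarith [ht.1]
      have h2 : (∫ t in uIoc r y, ‖phi G t - phi G r‖)
          ≤ ∫ t in Metric.closedBall r |y - r|, ‖phi G t - phi G r‖ :=
        setIntegral_mono_set hball (Eventually.of_forall fun t => norm_nonneg _)
          hsubset.eventuallyLE
      have hvol : (volume (Metric.closedBall r |y - r|)).toReal = 2 * |y - r| := by
        rw [Real.volume_closedBall, ENNReal.toReal_ofReal (by positivity)]
      have h3 : (∫ t in Metric.closedBall r |y - r|, ‖phi G t - phi G r‖)
          = 2 * |y - r| * ⨍ t in Metric.closedBall r |y - r|, ‖phi G t - phi G r‖ := by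
        rw [setAverage_eq, measureReal_def, hvol, smul_eq_mul]
        field_simp
      calc ‖slope (AF G) r y - phi G r‖
          ≤ |y - r|⁻¹ * ∫ t in uIoc r y, ‖phi G t - phi G r‖ := h1
        _ ≤ |y - r|⁻¹ * ∫ t in Metric.closedBall r |y - r|, ‖phi G t - phi G r‖ :=
            mul_le_mul_of_nonneg_left h2 (by positivity)
        _ = 2 * ⨍ t in Metric.closedBall r |y - r|, ‖phi G t - phi G r‖ := by
            rw [h3]; field_simp
    · simpa using key.const_mul 2
  have := main.add_const (phi G r)
  simpa using this

lemma exists_primitive {v : ℝ → ℝ} {a b : ℝ} (hv : IntegrableOn v (Ioc a b) volume) :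
    ∃ P : ℝ → ℝ, Continuous P ∧ (∀ r ∈ Icc a b, (∫ s in Ioc a r, v s) = P r)
      ∧ ∀ r, |P r| ≤ ∫ s in Ioc a b, |v s| := by
  have hind : Integrable ((Ioc a b).indicator v) volume :=
    (integrable_indicator_iff measurableSet_Ioc).2 hv
  refine ⟨fun r => ∫ s in (a)..r, (Ioc a b).indicator v s, ?_, ?_, ?_⟩
  · exact intervalIntegral.continuous_primitive
      (fun c d => hind.intervalIntegrable) a
  · intro r hr
    have h : (∫ s in (a)..r, (Ioc a b).indicator v s) = ∫ s in Ioc a r, v s := by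
      rw [intervalIntegral.integral_of_le hr.1, setIntegral_indicator measurableSet_Ioc,
        Set.Ioc_inter_Ioc, max_self, min_eq_left hr.2]
    exact h.symm
  · intro r
    have h1 : |∫ s in (a)..r, (Ioc a b).indicator v s|
        ≤ ∫ s in uIoc a r, |(Ioc a b).indicator v s| := by
      simpa [Real.norm_eq_abs] using
        intervalIntegral.norm_integral_le_integral_norm_uIoc
        (f := (Ioc a b).indicator v) (a := a) (b := r) (μ := volume)
    refine h1.trans ?_
    have h2 : ∀ s, |(Ioc a b).indicator v s| = (Ioc a b).indicator (fun t => |v t|) s := by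
      intro s
      simp [Set.indicator_apply]
      split <;> simp
    calc (∫ s in uIoc a r, |(Ioc a b).indicator v s|)
        ≤ ∫ s, |(Ioc a b).indicator v s| := by
          apply setIntegral_le_integral hind.abs
          exact Eventually.of_forall fun s => abs_nonneg _
      _ = ∫ s, (Ioc a b).indicator (fun t => |v t|) s := by
          exact integral_congr_ae (Eventually.of_forall h2)
      _ = ∫ s in Ioc a b, |v s| := integral_indicator measurableSet_Ioc

lemma fubini_Ioc {u v : ℝ → ℝ} {a b : ℝ}
    (hu : IntegrableOn u (Ioc a b) volume) (hv : IntegrableOn v (Ioc a b) volume) :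
    (∫ r in Ioc a b, u r * ∫ s in Ioc a r, v s)
      = ∫ s in Ioc a b, v s * ∫ r in Ioc s b, u r := by
  set μ' := (volume : Measure ℝ).restrict (Ioc a b) with hμ'
  set f : ℝ → ℝ → ℝ := fun r s => {q : ℝ × ℝ | q.2 ≤ q.1}.indicator
    (fun q => u q.1 * v q.2) (r, s) with hf
  have hunc : Function.uncurry f = {q : ℝ × ℝ | q.2 ≤ q.1}.indicator
      (fun q => u q.1 * v q.2) := by
    funext p; cases p; rfl
  have hfint : Integrable (Function.uncurry f) (μ'.prod μ') := by
    rw [hunc]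
    exact (hu.mul_prod hv).indicator (measurableSet_le measurable_snd measurable_fst)
  have hL : (∫ r, u r * (∫ s in Ioc a r, v s) ∂μ') = ∫ r, (∫ s, f r s ∂μ') ∂μ' := by
    apply integral_congr_ae
    filter_upwards [ae_restrict_mem measurableSet_Ioc] with r hr
    have h1 : ∀ s, f r s = (Iic r).indicator (fun s => u r * v s) s := by
      intro s
      simp only [hf, Set.indicator_apply, Set.mem_setOf_eq, Set.mem_Iic]
    rw [show (∫ s, f r s ∂μ') = ∫ s, (Iic r).indicator (fun s => u r * v s) s ∂μ' from
        integral_congr_ae (Eventually.of_forall h1),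
      integral_indicator measurableSet_Iic, hμ', Measure.restrict_restrict measurableSet_Iic,
      inter_comm, Set.Ioc_inter_Iic, min_eq_right hr.2, integral_const_mul]
  have hR : (∫ s, (∫ r, f r s ∂μ') ∂μ') = ∫ s, v s * (∫ r in Ioc s b, u r) ∂μ' := by
    apply integral_congr_ae
    filter_upwards [ae_restrict_mem measurableSet_Ioc] with s hs
    have h1 : ∀ r, f r s = (Ici s).indicator (fun r => u r * v s) r := by
      intro r
      simp only [hf, Set.indicator_apply, Set.mem_setOf_eq, Set.mem_Ici]
    have h2 : Ici s ∩ Ioc a b = Icc s b := by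
      ext r
      simp only [Set.mem_inter_iff, Set.mem_Ici, Set.mem_Ioc, Set.mem_Icc]
      exact ⟨fun h => ⟨h.1, h.2.2⟩, fun h => ⟨h.1, lt_of_lt_of_le hs.1 h.1, h.2⟩⟩
    rw [show (∫ r, f r s ∂μ') = ∫ r, (Ici s).indicator (fun r => u r * v s) r ∂μ' from
        integral_congr_ae (Eventually.of_forall h1),
      integral_indicator measurableSet_Ici, hμ', Measure.restrict_restrict measurableSet_Ici,
      h2, integral_Icc_eq_integral_Ioc, integral_mul_const, mul_comm]
  calc (∫ r in Ioc a b, u r * ∫ s in Ioc a r, v s) = ∫ r, (∫ s, f r s ∂μ') ∂μ' := hL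
    _ = ∫ s, (∫ r, f r s ∂μ') ∂μ' := integral_integral_swap hfint
    _ = ∫ s in Ioc a b, v s * ∫ r in Ioc s b, u r := hR

lemma sq_setIntegral_Ioc {ψ : ℝ → ℝ} {a b : ℝ} (hab : a ≤ b)
    (hψ : IntegrableOn ψ (Ioc a b) volume) :
    (∫ s in Ioc a b, ψ s) ^ 2 = 2 * ∫ t in Ioc a b, ψ t * ∫ s in Ioc a t, ψ s := by
  obtain ⟨P, hPc, hPeq, hPb⟩ := exists_primitive hψ
  set C : ℝ := ∫ s in Ioc a b, ψ s with hC
  set C₀ : ℝ := ∫ s in Ioc a b, |ψ s| with hC₀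
  have hmeas : ∀ᵐ t ∂((volume : Measure ℝ).restrict (Ioc a b)), t ∈ Ioc a b :=
    ae_restrict_mem measurableSet_Ioc
  have hintX : Integrable (fun t => ψ t * ∫ s in Ioc a t, ψ s)
      ((volume : Measure ℝ).restrict (Ioc a b)) := by
    apply Integrable.congr (f := fun t => ψ t * P t)
    · apply Integrable.mono' (hψ.norm.mul_const C₀)
        (hψ.1.mul hPc.aestronglyMeasurable)
      filter_upwards [hmeas] with t _
      simp only [Pi.mul_apply, norm_mul, Real.norm_eq_abs]
      exact mul_le_mul_of_nonneg_left (hPb t) (abs_nonneg _)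
    · filter_upwards [hmeas] with t ht
      rw [hPeq t ⟨ht.1.le, ht.2⟩]
  have hintY : Integrable (fun t => ψ t * ∫ s in Ioc t b, ψ s)
      ((volume : Measure ℝ).restrict (Ioc a b)) := by
    apply Integrable.congr (f := fun t => ψ t * (C - P t))
    · have : Integrable (fun t => ψ t * C - ψ t * P t)
          ((volume : Measure ℝ).restrict (Ioc a b)) := by
        apply Integrable.sub (hψ.mul_const C)
        apply Integrable.mono' (hψ.norm.mul_const C₀) (hψ.1.mul hPc.aestronglyMeasurable)
        filter_upwards [hmeas] with t _
        simp only [Pi.mul_apply, norm_mul, Real.norm_eq_abs]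
        exact mul_le_mul_of_nonneg_left (hPb t) (abs_nonneg _)
      exact this.congr (Eventually.of_forall fun t => by ring)
    · filter_upwards [hmeas] with t ht
      have hsplit : C = (∫ s in Ioc a t, ψ s) + ∫ s in Ioc t b, ψ s := by
        rw [hC, ← Set.Ioc_union_Ioc_eq_Ioc ht.1.le ht.2]
        exact setIntegral_union (Set.Ioc_disjoint_Ioc_of_le le_rfl) measurableSet_Ioc
          (hψ.mono_set (Set.Ioc_subset_Ioc_right ht.2))
          (hψ.mono_set (Set.Ioc_subset_Ioc_left ht.1.le))
      rw [hPeq t ⟨ht.1.le, ht.2⟩] at hsplit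
      rw [hsplit]; ring
  have h0 : C ^ 2 = ∫ t in Ioc a b, ψ t * C := by
    rw [sq, ← integral_mul_const]
  have h1 : (∫ t in Ioc a b, ψ t * C)
      = (∫ t in Ioc a b, ψ t * ∫ s in Ioc a t, ψ s)
        + ∫ t in Ioc a b, ψ t * ∫ s in Ioc t b, ψ s := by
    rw [← integral_add hintX hintY]
    apply integral_congr_ae
    filter_upwards [hmeas] with t ht
    have hsplit : C = (∫ s in Ioc a t, ψ s) + ∫ s in Ioc t b, ψ s := by
      rw [hC, ← Set.Ioc_union_Ioc_eq_Ioc ht.1.le ht.2]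
      exact setIntegral_union (Set.Ioc_disjoint_Ioc_of_le le_rfl) measurableSet_Ioc
        (hψ.mono_set (Set.Ioc_subset_Ioc_right ht.2))
        (hψ.mono_set (Set.Ioc_subset_Ioc_left ht.1.le))
    rw [hsplit]; ring
  have h2 : (∫ t in Ioc a b, ψ t * ∫ s in Ioc t b, ψ s)
      = ∫ t in Ioc a b, ψ t * ∫ s in Ioc a t, ψ s := (fubini_Ioc hψ hψ).symm
  rw [h0, h1, h2]; ring

lemma integrable_mul_primitive {u v : ℝ → ℝ} {a b : ℝ}
    (hu : IntegrableOn u (Ioc a b) volume) (hv : IntegrableOn v (Ioc a b) volume) :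
    Integrable (fun t => u t * ∫ s in Ioc a t, v s)
      ((volume : Measure ℝ).restrict (Ioc a b)) := by
  obtain ⟨P, hPc, hPeq, hPb⟩ := exists_primitive hv
  set C₀ : ℝ := ∫ s in Ioc a b, |v s| with hC₀
  apply Integrable.congr (f := fun t => u t * P t)
  · apply Integrable.mono' (hu.norm.mul_const C₀) (hu.1.mul hPc.aestronglyMeasurable)
    filter_upwards [ae_restrict_mem measurableSet_Ioc] with t _
    simp only [Pi.mul_apply, norm_mul, Real.norm_eq_abs]
    exact mul_le_mul_of_nonneg_left (hPb t) (abs_nonneg _)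
  · filter_upwards [ae_restrict_mem measurableSet_Ioc] with t ht
    rw [hPeq t ⟨ht.1.le, ht.2⟩]

lemma AF_eq_add (hG2 : MemLp G 2 (volume : Measure ℝ)) {a t : ℝ} (hat : a ≤ t) :
    AF G t = AF G a + ∫ s in Ioc a t, phi G s := by
  have hII := intervalIntegrable_of_memℒp2 (memℒp_phi hG2)
  have h : AF G t - AF G a = ∫ s in a..t, phi G s := by
    rw [AF, AF, intervalIntegral.integral_interval_sub_left (hII 0 t) (hII 0 a)]
  rw [intervalIntegral.integral_of_le hat] at h
  linarith

lemma AF_sq_diff (hG2 : MemLp G 2 (volume : Measure ℝ)) {a b : ℝ} (hab : a ≤ b) :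
    AF G b ^ 2 - AF G a ^ 2 = ∫ t in Ioc a b, 2 * phi G t * AF G t := by
  have hφ : IntegrableOn (phi G) (Ioc a b) volume :=
    integrableOn_of_memℒp2 (memℒp_phi hG2) measure_Ioc_lt_top.ne
  have key : AF G b ^ 2 - AF G a ^ 2
      = 2 * AF G a * (∫ s in Ioc a b, phi G s) + (∫ s in Ioc a b, phi G s) ^ 2 := by
    rw [AF_eq_add hG2 hab]; ring
  rw [key, sq_setIntegral_Ioc hab hφ]
  have hcongr : ∀ᵐ t ∂((volume : Measure ℝ).restrict (Ioc a b)), 2 * phi G t * AF G t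
      = 2 * AF G a * phi G t + 2 * (phi G t * ∫ s in Ioc a t, phi G s) := by
    filter_upwards [ae_restrict_mem measurableSet_Ioc] with t ht
    rw [AF_eq_add hG2 ht.1.le]; ring
  rw [integral_congr_ae hcongr,
    integral_add (hφ.const_mul _) ((integrable_mul_primitive hφ hφ).const_mul 2),
    integral_const_mul, integral_const_mul]

noncomputable def DD (G : ℝ → ℝ) (r : ℝ) : ℝ := phi G r / r - AF G r / r ^ 2
noncomputable def w (G : ℝ → ℝ) (r : ℝ) : ℝ :=
  r ^ 2 * (DD G r ^ 2 + ((G r - G (-r)) / r) ^ 2)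

lemma w_nonneg (G : ℝ → ℝ) (r : ℝ) : 0 ≤ w G r := by
  unfold w; positivity

lemma w_eq {G : ℝ → ℝ} {r : ℝ} (hr : r ≠ 0) :
    w G r = 2 * (G r ^ 2 + G (-r) ^ 2)
      + (AF G r ^ 2 * (r ^ 2)⁻¹ - (2 * phi G r * AF G r) * r⁻¹) := by
  unfold w DD phi
  field_simp
  ring

lemma integral_invsq {a b : ℝ} (ha : 0 < a) (hab : a ≤ b) :
    (∫ r in Ioc a b, (r ^ 2)⁻¹) = a⁻¹ - b⁻¹ := by
  rw [← intervalIntegral.integral_of_le hab]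
  have hderiv : ∀ x ∈ Set.uIcc a b, HasDerivAt (fun r : ℝ => -r⁻¹) ((x ^ 2)⁻¹) x := by
    intro x hx
    rw [Set.uIcc_of_le hab] at hx
    have hx0 : x ≠ 0 := (lt_of_lt_of_le ha hx.1).ne'
    simpa using (hasDerivAt_inv hx0).fun_neg
  have hint : IntervalIntegrable (fun r : ℝ => (r ^ 2)⁻¹) volume a b := by
    apply ContinuousOn.intervalIntegrable
    apply ContinuousOn.inv₀ (continuousOn_pow 2)
    intro x hx
    rw [Set.uIcc_of_le hab] at hx
    exact pow_ne_zero 2 (lt_of_lt_of_le ha hx.1).ne'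
  rw [intervalIntegral.integral_eq_sub_of_hasDerivAt hderiv hint]
  ring

lemma int_Ioc_w (hG2 : MemLp G 2 (volume : Measure ℝ)) {R T : ℝ} (hR : 0 < R) (hRT : R ≤ T) :
    IntegrableOn (w G) (Ioc R T) volume ∧
    (∫ r in Ioc R T, w G r)
      = 2 * (∫ r in Ioc R T, (G r ^ 2 + G (-r) ^ 2))
        + AF G R ^ 2 / R - AF G T ^ 2 / T := by
  set m : ℝ → ℝ := fun s => 2 * phi G s * AF G s with hm_def
  have hφ : IntegrableOn (phi G) (Ioc R T) volume :=
    integrableOn_of_memℒp2 (memℒp_phi hG2) measure_Ioc_lt_top.ne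
  obtain ⟨CA, hCA⟩ := isCompact_Icc.exists_bound_of_continuousOn
    (continuous_AF hG2).continuousOn (f := AF G)
  have hm : IntegrableOn m (Ioc R T) volume := by
    apply Integrable.mono' (hφ.norm.const_mul (2 * |CA|))
      (((hφ.const_mul 2).1).mul (continuous_AF hG2).aestronglyMeasurable)
    filter_upwards [ae_restrict_mem measurableSet_Ioc] with t ht
    simp only [Pi.mul_apply, norm_mul, Real.norm_eq_abs, abs_two]
    have h1 : |AF G t| ≤ |CA| := by
      have := hCA t ⟨ht.1.le, ht.2⟩
      rw [Real.norm_eq_abs] at this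
      exact this.trans (le_abs_self CA)
    nlinarith [abs_nonneg (phi G t), abs_nonneg (AF G t), abs_nonneg CA]
  -- integrability of the pieces
  have hGsq : IntegrableOn (fun r => G r ^ 2 + G (-r) ^ 2) (Ioc R T) volume :=
    (hG2.integrable_sq.add (memℒp_neg hG2).integrable_sq).integrableOn
  have hinvsq_cont : ContinuousOn (fun r : ℝ => (r ^ 2)⁻¹) (Icc R T) := by
    apply ContinuousOn.inv₀ (continuousOn_pow 2)
    intro x hx
    exact pow_ne_zero 2 (lt_of_lt_of_le hR hx.1).ne'
  have hinvsq : IntegrableOn (fun r : ℝ => (r ^ 2)⁻¹) (Ioc R T) volume :=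
    (hinvsq_cont.integrableOn_compact isCompact_Icc).mono_set Set.Ioc_subset_Icc_self
  have hA2 : IntegrableOn (fun r => AF G r ^ 2 * (r ^ 2)⁻¹) (Ioc R T) volume := by
    apply IntegrableOn.mono_set _ Set.Ioc_subset_Icc_self
    apply ContinuousOn.integrableOn_compact isCompact_Icc
    exact (((continuous_AF hG2).pow 2).continuousOn).mul hinvsq_cont
  have hmr : IntegrableOn (fun r => m r * r⁻¹) (Ioc R T) volume := by
    apply Integrable.mono' (hm.norm.mul_const R⁻¹)
      (hm.1.mul (measurable_inv.aestronglyMeasurable))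
    filter_upwards [ae_restrict_mem measurableSet_Ioc] with t ht
    simp only [Pi.mul_apply, norm_mul, Real.norm_eq_abs]
    apply mul_le_mul_of_nonneg_left _ (abs_nonneg _)
    rw [abs_inv]
    rw [abs_of_pos (lt_of_lt_of_le hR ht.1.le)]
    exact inv_anti₀ hR ht.1.le
  -- pointwise identity
  have hw : ∀ᵐ r ∂((volume : Measure ℝ).restrict (Ioc R T)),
      w G r = 2 * (G r ^ 2 + G (-r) ^ 2)
        + (AF G r ^ 2 * (r ^ 2)⁻¹ - m r * r⁻¹) := by
    filter_upwards [ae_restrict_mem measurableSet_Ioc] with r hr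
    exact w_eq (lt_of_lt_of_le hR hr.1.le).ne'
  have hsub : Integrable (fun r => AF G r ^ 2 * (r ^ 2)⁻¹ - m r * r⁻¹)
      ((volume : Measure ℝ).restrict (Ioc R T)) := hA2.sub hmr
  constructor
  · exact ((hGsq.const_mul 2).add hsub).congr
      (by filter_upwards [hw] with r h using h.symm)
  rw [integral_congr_ae hw, integral_add (hGsq.const_mul 2) hsub,
    integral_const_mul, integral_sub hA2 hmr]
  -- now handle ∫ AF²/r²
  have hAsq : ∀ᵐ r ∂((volume : Measure ℝ).restrict (Ioc R T)),
      AF G r ^ 2 * (r ^ 2)⁻¹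
        = AF G R ^ 2 * (r ^ 2)⁻¹ + (r ^ 2)⁻¹ * ∫ s in Ioc R r, m s := by
    filter_upwards [ae_restrict_mem measurableSet_Ioc] with r hr
    have h := AF_sq_diff hG2 hr.1.le
    rw [← hm_def] at h
    have : AF G r ^ 2 = AF G R ^ 2 + ∫ s in Ioc R r, m s := by linarith
    rw [this]; ring
  have hJ : (∫ r in Ioc R T, (r ^ 2)⁻¹ * ∫ s in Ioc R r, m s)
      = ∫ s in Ioc R T, m s * (s⁻¹ - T⁻¹) := by
    rw [fubini_Ioc hinvsq hm]
    apply integral_congr_ae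
    filter_upwards [ae_restrict_mem measurableSet_Ioc] with s hs
    rw [integral_invsq (lt_of_lt_of_le hR hs.1.le) hs.2]
  have hsplit2 : (∫ r in Ioc R T, AF G r ^ 2 * (r ^ 2)⁻¹)
      = AF G R ^ 2 * (R⁻¹ - T⁻¹) + ((∫ s in Ioc R T, m s * s⁻¹)
          - T⁻¹ * ∫ s in Ioc R T, m s) := by
    rw [integral_congr_ae hAsq,
      integral_add (hinvsq.const_mul _) (integrable_mul_primitive hinvsq hm),
      integral_const_mul, integral_invsq hR hRT, hJ]
    congr 1
    have : ∀ s, m s * (s⁻¹ - T⁻¹) = m s * s⁻¹ - T⁻¹ * (m s) := by intro s; ring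
    rw [integral_congr_ae (Eventually.of_forall this),
      integral_sub hmr (hm.const_mul _), integral_const_mul]
  have hmTot : (∫ s in Ioc R T, m s) = AF G T ^ 2 - AF G R ^ 2 := by
    simp only [hm_def]
    linarith [AF_sq_diff hG2 hRT]
  rw [hsplit2, hmTot]
  have hT : (0:ℝ) < T := lt_of_lt_of_le hR hRT
  field_simp
  ring

lemma tendsto_AF_sq_div (hG2 : MemLp G 2 (volume : Measure ℝ)) :
    Tendsto (fun T => AF G T ^ 2 / T) atTop (𝓝 0) := by
  have hφsq : Integrable (fun s => phi G s ^ 2) volume := (memℒp_phi hG2).integrable_sq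
  set L : ℝ := ∫ s in Ioi (0:ℝ), phi G s ^ 2 with hL
  have hmono : Tendsto (fun c => ∫ s in (0:ℝ)..c, phi G s ^ 2) atTop (𝓝 L) :=
    intervalIntegral_tendsto_integral_Ioi 0 hφsq.integrableOn tendsto_id
  rw [Metric.tendsto_atTop]
  intro ε hε
  have h4 : (0:ℝ) < ε/4 := by linarith
  have hev : ∀ᶠ T₀ : ℝ in atTop,
      (1 ≤ T₀ ∧ L - (∫ s in (0:ℝ)..T₀, phi G s ^ 2) < ε/4) := by
    filter_upwards [eventually_ge_atTop (1:ℝ),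
      (hmono.eventually (eventually_gt_nhds (by linarith : L - ε/4 < L)))] with T₀ h1 h2
    exact ⟨h1, by linarith⟩
  obtain ⟨T₀, hT₀1, hT₀2⟩ := hev.exists
  set a0 : ℝ := AF G T₀ with ha0
  set N : ℝ := max T₀ (4 * a0 ^ 2 / ε + 1) with hN
  refine ⟨N, fun T hT => ?_⟩
  have hTT₀ : T₀ ≤ T := le_trans (le_max_left _ _) hT
  have hT1 : (1:ℝ) ≤ T := le_trans hT₀1 hTT₀
  have hTpos : (0:ℝ) < T := lt_of_lt_of_le one_pos hT1
  have hT₀pos : (0:ℝ) < T₀ := lt_of_lt_of_le one_pos hT₀1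
  -- tail bound on Ioc T₀ T
  have htail : (∫ s in Ioc T₀ T, phi G s ^ 2) ≤ ε/4 := by
    have h1 : (∫ s in Ioc 0 T₀, phi G s ^ 2) + (∫ s in Ioc T₀ T, phi G s ^ 2)
        = ∫ s in Ioc 0 T, phi G s ^ 2 := by
      rw [← setIntegral_union (Set.Ioc_disjoint_Ioc_of_le le_rfl) measurableSet_Ioc
        hφsq.integrableOn hφsq.integrableOn, Set.Ioc_union_Ioc_eq_Ioc hT₀pos.le hTT₀]
    have h2 : (∫ s in Ioc 0 T, phi G s ^ 2) ≤ L := by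
      rw [hL]
      apply setIntegral_mono_set hφsq.integrableOn
        (Eventually.of_forall fun s => sq_nonneg _)
        (Set.Ioc_subset_Ioi_self.eventuallyLE)
    have h3 : (∫ s in (0:ℝ)..T₀, phi G s ^ 2) = ∫ s in Ioc 0 T₀, phi G s ^ 2 :=
      intervalIntegral.integral_of_le hT₀pos.le
    rw [h3] at hT₀2
    linarith
  -- Cauchy–Schwarz
  set X : ℝ := ∫ s in Ioc T₀ T, |phi G s| with hX
  have hXnonneg : 0 ≤ X := by
    rw [hX]; exact setIntegral_nonneg measurableSet_Ioc fun s _ => abs_nonneg _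
  have hCS : X ^ 2 ≤ (T - T₀) * ∫ s in Ioc T₀ T, phi G s ^ 2 := by
    set μ' := (volume : Measure ℝ).restrict (Ioc T₀ T) with hμ'
    haveI : IsFiniteMeasure μ' :=
      ⟨by rw [hμ', Measure.restrict_apply_univ]; exact measure_Ioc_lt_top⟩
    have hconj : Real.HolderConjugate 2 2 := by constructor <;> norm_num
    have hf : MemLp (fun s => |phi G s|) (ENNReal.ofReal 2) μ' := by
      have h2 : (ENNReal.ofReal 2) = (2 : ENNReal) := by
        simp [ENNReal.ofReal_ofNat]
      rw [h2]
      simpa [Real.norm_eq_abs] using ((memℒp_phi hG2).restrict (Ioc T₀ T)).norm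
    have hg : MemLp (fun _ : ℝ => (1:ℝ)) (ENNReal.ofReal 2) μ' := memLp_const 1
    have := integral_mul_le_Lp_mul_Lq_of_nonneg hconj
      (Eventually.of_forall fun s => abs_nonneg (phi G s))
      (Eventually.of_forall fun _ => zero_le_one) hf hg
    simp only [mul_one, Real.one_rpow] at this
    have h1 : (∫ (a : ℝ), (1:ℝ) ∂μ') = T - T₀ := by
      rw [integral_const, smul_eq_mul, mul_one, hμ', measureReal_def, Measure.restrict_apply_univ,
        Real.volume_Ioc, ENNReal.toReal_ofReal (by linarith)]
    rw [h1] at this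
    have h2 : (∫ a, |phi G a| ^ (2:ℝ) ∂μ') = ∫ s in Ioc T₀ T, phi G s ^ 2 := by
      apply integral_congr_ae (Eventually.of_forall fun s => ?_)
      rw [show (2:ℝ) = ((2:ℕ):ℝ) by norm_num, Real.rpow_natCast, sq_abs]
    rw [h2] at this
    -- this : X ≤ (∫ φ²)^(1/2) * (T−T₀)^(1/2)
    have hIa : (0:ℝ) ≤ ∫ s in Ioc T₀ T, phi G s ^ 2 :=
      setIntegral_nonneg measurableSet_Ioc fun s _ => sq_nonneg _
    have hIb : (0:ℝ) ≤ T - T₀ := by linarith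
    have hsq : ((∫ s in Ioc T₀ T, phi G s ^ 2) ^ ((1:ℝ)/2) * (T - T₀) ^ ((1:ℝ)/2)) ^ 2
        = (T - T₀) * ∫ s in Ioc T₀ T, phi G s ^ 2 := by
      rw [mul_pow, ← Real.rpow_natCast (_ ^ ((1:ℝ)/2)) 2, ← Real.rpow_natCast (_ ^ ((1:ℝ)/2)) 2,
        ← Real.rpow_mul hIa, ← Real.rpow_mul hIb]
      norm_num
      ring
    calc X ^ 2 ≤ ((∫ s in Ioc T₀ T, phi G s ^ 2) ^ ((1:ℝ)/2) * (T - T₀) ^ ((1:ℝ)/2)) ^ 2 := by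
          apply pow_le_pow_left₀ hXnonneg
          exact this
      _ = (T - T₀) * ∫ s in Ioc T₀ T, phi G s ^ 2 := hsq
  have hAF : AF G T = a0 + ∫ s in Ioc T₀ T, phi G s := AF_eq_add hG2 hTT₀
  have habs : |∫ s in Ioc T₀ T, phi G s| ≤ X := by
    rw [hX]
    simpa [Real.norm_eq_abs] using
      norm_integral_le_integral_norm (μ := (volume : Measure ℝ).restrict (Ioc T₀ T))
        (f := phi G)
  -- combine
  have hbound : AF G T ^ 2 ≤ 2 * a0 ^ 2 + 2 * X ^ 2 := by
    rw [hAF]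
    have hs2 : (∫ s in Ioc T₀ T, phi G s) ^ 2 ≤ X ^ 2 := by
      nlinarith [sq_abs (∫ s in Ioc T₀ T, phi G s), habs,
        abs_nonneg (∫ s in Ioc T₀ T, phi G s), hXnonneg]
    nlinarith [sq_nonneg (a0 - ∫ s in Ioc T₀ T, phi G s)]
  have hX2 : X ^ 2 ≤ T * (ε/4) := by
    calc X ^ 2 ≤ (T - T₀) * ∫ s in Ioc T₀ T, phi G s ^ 2 := hCS
      _ ≤ (T - T₀) * (ε/4) := by
          apply mul_le_mul_of_nonneg_left htail (by linarith)
      _ ≤ T * (ε/4) := by nlinarith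
  have hTN : 4 * a0 ^ 2 / ε + 1 ≤ T := le_trans (le_max_right _ _) hT
  have hfinal : AF G T ^ 2 / T < ε := by
    rw [div_lt_iff₀ hTpos]
    have h5 : 2 * a0 ^ 2 < (ε/2) * T := by
      have h6 : 4 * a0 ^ 2 / ε < T := by linarith
      rw [div_lt_iff₀ hε] at h6
      nlinarith
    nlinarith
  rw [Real.dist_eq, sub_zero, abs_of_nonneg (by positivity : (0:ℝ) ≤ AF G T ^ 2 / T)]
  exact hfinal

lemma oneD_main (hG2 : MemLp G 2 (volume : Measure ℝ)) {R : ℝ} (hR : 0 < R) :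
    IntegrableOn (w G) (Ioi R) volume ∧
    2 * (∫ r in Ioi R, (G r ^ 2 + G (-r) ^ 2)) ≤ ∫ r in Ioi R, w G r := by
  have hGsqInt : Integrable (fun r : ℝ => G r ^ 2 + G (-r) ^ 2) volume :=
    hG2.integrable_sq.add (memℒp_neg hG2).integrable_sq
  have IG : ℝ := 0
  set C : ℝ := 2 * (∫ r in Ioi R, (G r ^ 2 + G (-r) ^ 2)) + AF G R ^ 2 / R with hC
  have hIGmono : ∀ T, (∫ r in Ioc R T, (G r ^ 2 + G (-r) ^ 2))
      ≤ ∫ r in Ioi R, (G r ^ 2 + G (-r) ^ 2) := by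
    intro T
    apply setIntegral_mono_set hGsqInt.integrableOn
      (Eventually.of_forall fun r => by positivity)
      (Set.Ioc_subset_Ioi_self.eventuallyLE)
  have hwIoc : ∀ T : ℝ, IntegrableOn (w G) (Ioc R T) volume := by
    intro T
    rcases le_or_gt R T with h | h
    · exact (int_Ioc_w hG2 hR h).1
    · rw [Set.Ioc_eq_empty (by exact fun hc => absurd h (not_lt.2 hc.le))]
      exact integrableOn_empty
  have hbdd : ∀ᶠ T : ℝ in atTop, (∫ r in R..T, ‖w G r‖) ≤ C := by
    filter_upwards [eventually_ge_atTop R] with T hRT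
    rw [intervalIntegral.integral_of_le hRT]
    have h1 : (∫ r in Ioc R T, ‖w G r‖) = ∫ r in Ioc R T, w G r := by
      apply integral_congr_ae (Eventually.of_forall fun r => ?_)
      rw [Real.norm_eq_abs, abs_of_nonneg (w_nonneg G r)]
    rw [h1, (int_Ioc_w hG2 hR hRT).2, hC]
    have hT : (0:ℝ) < T := lt_of_lt_of_le hR hRT
    have := hIGmono T
    have hAT : 0 ≤ AF G T ^ 2 / T := by positivity
    linarith
  have hwIoi : IntegrableOn (w G) (Ioi R) volume :=
    integrableOn_Ioi_of_intervalIntegral_norm_bounded C R hwIoc tendsto_id hbdd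
  refine ⟨hwIoi, ?_⟩
  have lim1 : Tendsto (fun T => ∫ r in Ioc R T, w G r) atTop (𝓝 (∫ r in Ioi R, w G r)) := by
    apply (intervalIntegral_tendsto_integral_Ioi R hwIoi tendsto_id).congr'
    filter_upwards [eventually_ge_atTop R] with T hRT
    simp only [id_eq]
    rw [intervalIntegral.integral_of_le hRT]
  have lim2 : Tendsto (fun T => ∫ r in Ioc R T, (G r ^ 2 + G (-r) ^ 2)) atTop
      (𝓝 (∫ r in Ioi R, (G r ^ 2 + G (-r) ^ 2))) := by
    apply (intervalIntegral_tendsto_integral_Ioi R hGsqInt.integrableOn tendsto_id).congr'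
    filter_upwards [eventually_ge_atTop R] with T hRT
    simp only [id_eq]
    rw [intervalIntegral.integral_of_le hRT]
  have lim3 := tendsto_AF_sq_div hG2
  have lim4 : Tendsto (fun T => 2 * (∫ r in Ioc R T, (G r ^ 2 + G (-r) ^ 2))
      + AF G R ^ 2 / R - AF G T ^ 2 / T) atTop
      (𝓝 (2 * (∫ r in Ioi R, (G r ^ 2 + G (-r) ^ 2)) + AF G R ^ 2 / R - 0)) :=
    ((lim2.const_mul 2).add_const _).sub lim3
  have heq : (∫ r in Ioi R, w G r)
      = 2 * (∫ r in Ioi R, (G r ^ 2 + G (-r) ^ 2)) + AF G R ^ 2 / R - 0 := by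
    apply tendsto_nhds_unique lim1
    apply lim4.congr'
    filter_upwards [eventually_ge_atTop R] with T hRT
    rw [(int_Ioc_w hG2 hR hRT).2]
  rw [heq]
  have : 0 ≤ AF G R ^ 2 / R := by positivity
  linarith

noncomputable def U (G : ℝ → ℝ) (x : EuclideanSpace ℝ (Fin 3)) : ℝ :=
  (1 / ‖x‖) * ∫ s in Ioc (-‖x‖) ‖x‖, G s

lemma Ioc_int_eq_AF (hG2 : MemLp G 2 (volume : Measure ℝ)) {t : ℝ} (ht : 0 ≤ t) :
    (∫ s in Ioc (-t) t, G s) = AF G t := by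
  have hIIG := intervalIntegrable_of_memℒp2 hG2
  have hIIN := intervalIntegrable_of_memℒp2 (memℒp_neg hG2)
  rw [← intervalIntegral.integral_of_le (by linarith : -t ≤ t)]
  have h1 : (∫ s in (-t)..(0:ℝ), G s) + ∫ s in (0:ℝ)..t, G s = ∫ s in (-t)..t, G s :=
    intervalIntegral.integral_add_adjacent_intervals (hIIG (-t) 0) (hIIG 0 t)
  have h2 : (∫ s in (0:ℝ)..t, G (-s)) = ∫ s in (-t)..(0:ℝ), G s := by
    simpa using intervalIntegral.integral_comp_neg (a := (0:ℝ)) (b := t) G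
  have h3 : AF G t = (∫ s in (0:ℝ)..t, G s) + ∫ s in (0:ℝ)..t, G (-s) := by
    rw [AF]
    exact intervalIntegral.integral_add (hIIG 0 t) (hIIN 0 t)
  rw [h3, h2, ← h1]
  ring

lemma U_eq (hG2 : MemLp G 2 (volume : Measure ℝ)) {x : EuclideanSpace ℝ (Fin 3)} (hx : x ≠ 0) :
    U G x = AF G ‖x‖ / ‖x‖ := by
  rw [U, Ioc_int_eq_AF hG2 (norm_nonneg x)]
  rw [one_div, inv_mul_eq_div]

lemma hasFDerivAt_norm_euc {x : EuclideanSpace ℝ (Fin 3)} (hx : x ≠ 0) :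
    HasFDerivAt (fun y : EuclideanSpace ℝ (Fin 3) => ‖y‖) (‖x‖⁻¹ • innerSL ℝ x) x := by
  have hnx : (0:ℝ) < ‖x‖ := norm_pos_iff.2 hx
  have h1 : HasFDerivAt (fun y : EuclideanSpace ℝ (Fin 3) => ‖y‖ ^ 2)
      (2 • (innerSL ℝ x)) x := (hasStrictFDerivAt_norm_sq x).hasFDerivAt
  have h2 : HasDerivAt Real.sqrt (1 / (2 * Real.sqrt (‖x‖ ^ 2))) (‖x‖ ^ 2) :=
    hasDerivAt_sqrt (by positivity)
  have h1' : HasFDerivAt (fun y : EuclideanSpace ℝ (Fin 3) => ‖y‖ ^ 2)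
      ((2:ℝ) • innerSL ℝ x) x := by
    refine h1.congr_fderiv ?_
    ext z
    simp [two_smul]
  have h3 := h2.comp_hasFDerivAt x h1'
  have hfun : (Real.sqrt ∘ fun y : EuclideanSpace ℝ (Fin 3) => ‖y‖ ^ 2)
      = fun y : EuclideanSpace ℝ (Fin 3) => ‖y‖ := by
    funext y
    simp [Function.comp, Real.sqrt_sq (norm_nonneg y)]
  rw [hfun] at h3
  refine h3.congr_fderiv ?_
  rw [Real.sqrt_sq (norm_nonneg x), smul_smul]
  congr 1
  field_simp

set_option synthInstance.maxHeartbeats 1000000 in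
lemma norm_normDeriv {x : EuclideanSpace ℝ (Fin 3)} (hx : x ≠ 0) :
    ‖(‖x‖⁻¹ • innerSL ℝ x : EuclideanSpace ℝ (Fin 3) →L[ℝ] ℝ)‖ = 1 := by
  have hnx : (0:ℝ) < ‖x‖ := norm_pos_iff.2 hx
  rw [norm_smul ‖x‖⁻¹ (innerSL ℝ x), innerSL_apply_norm, Real.norm_eq_abs, abs_of_nonneg (by positivity)]
  field_simp

lemma hasFDerivAt_U (hG2 : MemLp G 2 (volume : Measure ℝ))
    {x : EuclideanSpace ℝ (Fin 3)} (hx : x ≠ 0) {d : ℝ}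
    (hd : HasDerivAt (fun t => AF G t / t) d ‖x‖) :
    HasFDerivAt (U G) (d • (‖x‖⁻¹ • innerSL ℝ x)) x := by
  have hN := hasFDerivAt_norm_euc hx
  have h1 := hd.comp_hasFDerivAt x hN
  apply h1.congr_of_eventuallyEq
  filter_upwards [eventually_ne_nhds hx] with y hy
  exact U_eq hG2 hy

lemma norm_fderiv_U_eq (G : ℝ → ℝ) {x y : EuclideanSpace ℝ (Fin 3)} (h : ‖x‖ = ‖y‖) :
    ‖fderiv ℝ (U G) x‖ = ‖fderiv ℝ (U G) y‖ := by
  set L := Submodule.reflection (Submodule.span ℝ {x - y})ᗮ with hLdef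
  have hL : L x = y := Submodule.reflection_sub h
  have hcomp : (U G) ∘ (L.toContinuousLinearEquiv :
      EuclideanSpace ℝ (Fin 3) ≃L[ℝ] EuclideanSpace ℝ (Fin 3)) = U G := by
    funext z
    simp only [Function.comp, U]
    rw [show ((L.toContinuousLinearEquiv) z : EuclideanSpace ℝ (Fin 3)) = L z from rfl,
      L.norm_map z]
  have h2 := ContinuousLinearEquiv.comp_right_fderiv (iso := L.toContinuousLinearEquiv)
    (f := U G) (x := x)
  rw [hcomp] at h2
  have h3 : L.toContinuousLinearEquiv x = y := hL
  rw [h3] at h2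
  rw [h2]
  have h4 := ContinuousLinearMap.opNorm_comp_linearIsometryEquiv (fderiv ℝ (U G) y) L
  have h5 : (fderiv ℝ (U G) y).comp (↑L.toContinuousLinearEquiv :
      EuclideanSpace ℝ (Fin 3) →L[ℝ] EuclideanSpace ℝ (Fin 3))
      = (fderiv ℝ (U G) y).comp L.toLinearIsometry.toContinuousLinearMap := by
    ext z; rfl
  rw [h4]

noncomputable def e3 : EuclideanSpace ℝ (Fin 3) := EuclideanSpace.single (0 : Fin 3) (1:ℝ)

lemma norm_e3 : ‖e3‖ = 1 := by
  rw [e3, EuclideanSpace.norm_single]; norm_num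

noncomputable def h3d (G : ℝ → ℝ) (r : ℝ) : ℝ :=
  ‖fderiv ℝ (U G) (r • e3)‖ ^ 2 + ((G r - G (-r)) / r) ^ 2

lemma integrand_radial (G : ℝ → ℝ) {x : EuclideanSpace ℝ (Fin 3)} (hx : x ≠ 0) :
    ‖fderiv ℝ (U G) x‖ ^ 2 + ((G ‖x‖ - G (-‖x‖)) / ‖x‖) ^ 2 = h3d G ‖x‖ := by
  have h : ‖x‖ = ‖(‖x‖ : ℝ) • e3‖ := by
    rw [norm_smul, norm_e3, Real.norm_eq_abs, abs_of_nonneg (norm_nonneg x), mul_one]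
  rw [h3d, norm_fderiv_U_eq G h]

lemma ae_h3d_eq_w (hG2 : MemLp G 2 (volume : Measure ℝ)) :
    ∀ᵐ r : ℝ, r ∈ Ioi (0:ℝ) → r ^ 2 * h3d G r = w G r := by
  filter_upwards [ae_hasDerivAt_AF hG2] with r hAF hr
  have hr0 : (0:ℝ) < r := hr
  have hg : HasDerivAt (fun t => AF G t / t) (DD G r) r := by
    have h := hAF.fun_div (hasDerivAt_id r) hr0.ne'
    refine h.congr_deriv ?_
    simp only [DD, id]
    field_simp
  have hx : (r • e3 : EuclideanSpace ℝ (Fin 3)) ≠ 0 := by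
    intro hc
    have := congrArg norm hc
    rw [norm_smul, norm_e3, Real.norm_eq_abs, abs_of_pos hr0, mul_one, norm_zero] at this
    exact hr0.ne' this
  have hnorm : ‖(r • e3 : EuclideanSpace ℝ (Fin 3))‖ = r := by
    rw [norm_smul, norm_e3, Real.norm_eq_abs, abs_of_pos hr0, mul_one]
  have hU : HasFDerivAt (U G)
      (DD G r • (‖(r • e3 : EuclideanSpace ℝ (Fin 3))‖⁻¹ •
        innerSL ℝ (r • e3 : EuclideanSpace ℝ (Fin 3)))) (r • e3) := by
    apply hasFDerivAt_U hG2 hx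
    rw [hnorm]
    exact hg
  have hfd : ‖fderiv ℝ (U G) (r • e3)‖ = |DD G r| := by
    rw [hU.fderiv, norm_smul, norm_normDeriv hx, mul_one, Real.norm_eq_abs]
  rw [h3d, hfd, sq_abs, w]

lemma volume_unitBall3 :
    (volume (Metric.ball (0 : EuclideanSpace ℝ (Fin 3)) 1)).toReal = 4 / 3 * π := by
  rw [EuclideanSpace.volume_ball]
  have hcard : Fintype.card (Fin 3) = 3 := by simp
  rw [hcard]
  have hΓ : Real.Gamma (((3:ℕ):ℝ) / 2 + 1) = 3 / 4 * Real.sqrt π := by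
    have h1 : ((3:ℕ):ℝ) / 2 + 1 = 3 / 2 + 1 := by norm_num
    rw [h1, Real.Gamma_add_one (by norm_num)]
    have h2 : (3:ℝ) / 2 = 1 / 2 + 1 := by norm_num
    rw [h2, Real.Gamma_add_one (by norm_num), Real.Gamma_one_half_eq]
    ring
  rw [hΓ]
  have hπ : (0:ℝ) < Real.sqrt π := Real.sqrt_pos.2 pi_pos
  have hval : Real.sqrt π ^ 3 / (3 / 4 * Real.sqrt π) = 4 / 3 * π := by
    have h3 : Real.sqrt π ^ 3 = π * Real.sqrt π := by
      rw [pow_succ, Real.sq_sqrt pi_nonneg]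
    rw [h3]
    field_simp
  rw [hval]
  simp [ENNReal.toReal_ofReal (by positivity : (0:ℝ) ≤ 4 / 3 * π)]

lemma threeD_eq (hG2 : MemLp G 2 (volume : Measure ℝ)) {R : ℝ} (hR : 0 < R) :
    (∫ x in {x : EuclideanSpace ℝ (Fin 3) | R < ‖x‖},
        (‖fderiv ℝ (U G) x‖ ^ 2 + ((G ‖x‖ - G (-‖x‖)) / ‖x‖) ^ 2))
      = 4 * π * ∫ r in Ioi R, r ^ 2 * h3d G r := by
  set S : Set (EuclideanSpace ℝ (Fin 3)) := {x | R < ‖x‖} with hS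
  have hSm : MeasurableSet S := measurableSet_lt measurable_const measurable_norm
  set f : ℝ → ℝ := (Ioi R).indicator (h3d G) with hf
  have h1 : (∫ x in S, (‖fderiv ℝ (U G) x‖ ^ 2 + ((G ‖x‖ - G (-‖x‖)) / ‖x‖) ^ 2))
      = ∫ x in S, f ‖x‖ := by
    apply setIntegral_congr_fun hSm
    intro x hx
    have hxR : R < ‖x‖ := hx
    have hx0 : x ≠ 0 := by
      intro hc
      rw [hc, norm_zero] at hxR
      linarith
    show ‖fderiv ℝ (U G) x‖ ^ 2 + ((G ‖x‖ - G (-‖x‖)) / ‖x‖) ^ 2 = f ‖x‖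
    rw [integrand_radial G hx0, hf, Set.indicator_of_mem (by exact hxR : ‖x‖ ∈ Ioi R)]
  have h2 : (∫ x in S, f ‖x‖) = ∫ x : EuclideanSpace ℝ (Fin 3), f ‖x‖ := by
    apply setIntegral_eq_integral_of_forall_compl_eq_zero
    intro x hx
    have : ¬ (R < ‖x‖) := hx
    rw [hf, Set.indicator_of_notMem (by simpa using this)]
  have h3 := integral_fun_norm_addHaar (volume : Measure (EuclideanSpace ℝ (Fin 3))) f
  rw [finrank_euclideanSpace_fin] at h3
  have h4 : (∫ y in Ioi (0:ℝ), y ^ (3 - 1) • f y) = ∫ r in Ioi R, r ^ 2 * h3d G r := by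
    have hind : ∀ y : ℝ, y ^ (3 - 1) • f y
        = (Ioi R).indicator (fun r => r ^ 2 * h3d G r) y := by
      intro y
      by_cases hy : y ∈ Ioi R
      · rw [hf, Set.indicator_of_mem hy, Set.indicator_of_mem hy, smul_eq_mul]
      · rw [hf, Set.indicator_of_notMem hy, Set.indicator_of_notMem hy, smul_zero]
    rw [integral_congr_ae (Eventually.of_forall hind),
      setIntegral_indicator measurableSet_Ioi, Set.Ioi_inter_Ioi, max_eq_right hR.le]
  rw [h1, h2, h3, h4, measureReal_def, volume_unitBall3]
  rw [nsmul_eq_mul, smul_eq_mul]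
  push_cast
  ring

lemma lhs_eq (hG2 : MemLp G 2 (volume : Measure ℝ)) {R : ℝ} (hR : 0 < R) :
    (∫ s in {s : ℝ | R < |s|}, (G s) ^ 2) = ∫ r in Ioi R, (G r ^ 2 + G (-r) ^ 2) := by
  have hset : {s : ℝ | R < |s|} = Iio (-R) ∪ Ioi R := by
    ext s
    simp only [mem_setOf_eq, mem_union, mem_Iio, mem_Ioi, lt_abs]
    constructor
    · rintro (h | h)
      exacts [Or.inr h, Or.inl (by linarith)]
    · rintro (h | h)
      exacts [Or.inr (by linarith), Or.inl h]
  have hdisj : Disjoint (Iio (-R)) (Ioi R) := by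
    rw [Set.disjoint_left]
    intro s hs hs'
    simp only [mem_Iio] at hs
    simp only [mem_Ioi] at hs'
    linarith
  have hint : Integrable (fun s : ℝ => G s ^ 2) volume := hG2.integrable_sq
  have hintn : Integrable (fun s : ℝ => G (-s) ^ 2) volume := (memℒp_neg hG2).integrable_sq
  rw [hset, setIntegral_union hdisj measurableSet_Ioi hint.integrableOn hint.integrableOn]
  have hneg : (∫ s in Iio (-R), G s ^ 2) = ∫ r in Ioi R, G (-r) ^ 2 := by
    rw [integral_comp_neg_Ioi R (fun s => G s ^ 2), ← integral_Iic_eq_integral_Iio]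
  rw [hneg, integral_add hint.integrableOn hintn.integrableOn]
  ring

end Stmt1Aux

open Stmt1Aux in
/-- The exterior energy of the radial data determined by a radiation profile `G`
dominates `8π` times the tail of `‖G‖_{L²}²`. -/
theorem stmt_1
    (G : ℝ → ℝ) (hG : MemLp G 2 (volume : Measure ℝ))
    (R : ℝ) (hR : 0 < R) :
    8 * π * (∫ s in {s : ℝ | R < |s|}, (G s) ^ 2)
      ≤ ∫ x in {x : EuclideanSpace ℝ (Fin 3) | R < ‖x‖},
          (‖fderiv ℝ (fun x : EuclideanSpace ℝ (Fin 3) =>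
              (1 / ‖x‖) * ∫ s in Ioc (-‖x‖) ‖x‖, G s) x‖ ^ 2
            + ((G ‖x‖ - G (-‖x‖)) / ‖x‖) ^ 2) := by
  have hUeq : (fun x : EuclideanSpace ℝ (Fin 3) =>
      (1 / ‖x‖) * ∫ s in Ioc (-‖x‖) ‖x‖, G s) = U G := rfl
  rw [hUeq]
  obtain ⟨hwint, hineq⟩ := oneD_main hG hR
  have h3 := threeD_eq hG hR
  have hcongr : (∫ r in Ioi R, r ^ 2 * h3d G r) = ∫ r in Ioi R, w G r := by
    apply integral_congr_ae
    filter_upwards [ae_restrict_mem measurableSet_Ioi, ae_restrict_of_ae (ae_h3d_eq_w hG)]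
      with r hr h
    exact h (lt_trans hR hr)
  rw [lhs_eq hG hR]
  calc 8 * π * (∫ r in Ioi R, (G r ^ 2 + G (-r) ^ 2))
      = 4 * π * (2 * ∫ r in Ioi R, (G r ^ 2 + G (-r) ^ 2)) := by ring
    _ ≤ 4 * π * (∫ r in Ioi R, w G r) := by
        apply mul_le_mul_of_nonneg_left hineq (by positivity)
    _ = 4 * π * (∫ r in Ioi R, r ^ 2 * h3d G r) := by rw [hcongr]
    _ = _ := h3.symm
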